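/- Let a > 0 be a real number and let γ(s, λ) = ∫_0^λ t^{s−1}·e^{−t} dt denote the lower incomplete gamma function. Then for every λ > 0, γ(a, λ)·(2·γ(a+2, λ) − (a+2)·γ(a+1, λ)) ≤ γ(a+1, λ)². -/
import Mathlib


open MeasureTheory intervalIntegral

private lemma aux_intble (s lam : ℝ) (hs : 0 < s) (hlam : 0 ≤ lam) :
    IntervalIntegrable (fun t : ℝ => t ^ (s - 1) * Real.exp (-t)) volume 0 lam := by
  apply IntervalIntegrable.mul_continuousOn
  · exact intervalIntegrable_rpow' (by linarith)
  · exact (Real.continuous_exp.comp continuous_neg).continuousOn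

private lemma aux_pg (s lam : ℝ) (hlam : 0 ≤ lam) :
    Complex.partialGamma (s : ℂ) lam
      = ((∫ t in (0:ℝ)..lam, t ^ (s - 1) * Real.exp (-t) : ℝ) : ℂ) := by
  rw [Complex.partialGamma, ← intervalIntegral.integral_ofReal]
  apply intervalIntegral.integral_congr
  intro x hx
  have hx0 : 0 ≤ x := by
    rcases hx with ⟨h1, h2⟩
    simpa [min_eq_left hlam] using h1
  show ((Real.exp (-x) : ℝ) : ℂ) * (x:ℂ) ^ ((s:ℂ) - 1) = ((x ^ (s - 1) * Real.exp (-x) : ℝ) : ℂ)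
  rw [show ((s:ℂ) - 1) = ((s - 1 : ℝ) : ℂ) by push_cast; ring,
    ← Complex.ofReal_cpow hx0 (s - 1)]
  push_cast
  ring

private lemma aux_rec (s lam : ℝ) (hs : 0 < s) (hlam : 0 ≤ lam) :
    (∫ t in (0:ℝ)..lam, t ^ (s + 1 - 1) * Real.exp (-t))
      = s * (∫ t in (0:ℝ)..lam, t ^ (s - 1) * Real.exp (-t))
        - Real.exp (-lam) * lam ^ s := by
  have h := Complex.partialGamma_add_one (s := (s : ℂ)) (by simpa using hs) hlam
  rw [show ((s : ℂ) + 1) = ((s + 1 : ℝ) : ℂ) by push_cast; ring] at h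
  rw [aux_pg (s + 1) lam hlam, aux_pg s lam hlam] at h
  rw [← Complex.ofReal_cpow hlam s] at h
  have : ((∫ t in (0:ℝ)..lam, t ^ (s + 1 - 1) * Real.exp (-t) : ℝ) : ℂ)
      = ((s * (∫ t in (0:ℝ)..lam, t ^ (s - 1) * Real.exp (-t))
        - Real.exp (-lam) * lam ^ s : ℝ) : ℂ) := by
    push_cast
    rw [h, Complex.ofReal_exp]
    push_cast
    ring
  exact_mod_cast this

/-- Incomplete-gamma inequality from the proof of Theorem 3.1: for `a > 0` and
`λ > 0`, `γ(a,λ) (2 γ(a+2,λ) - (a+2) γ(a+1,λ)) ≤ γ(a+1,λ)²`, where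
`γ(s,λ) = ∫_0^λ t^(s-1) e^(-t) dt` is the lower incomplete gamma function. -/
theorem stmt17 (a : ℝ) (ha : 0 < a) (lam : ℝ) (hlam : 0 < lam)
    (γ : ℝ → ℝ → ℝ)
    (hγ : ∀ s l, γ s l = ∫ t in (0 : ℝ)..l, t ^ (s - 1) * Real.exp (-t)) :
    γ a lam * (2 * γ (a + 2) lam - (a + 2) * γ (a + 1) lam) ≤ γ (a + 1) lam ^ 2 := by
  set G0 := γ a lam with hG0
  set G1 := γ (a + 1) lam with hG1
  set G2 := γ (a + 2) lam with hG2
  have hlam' : (0:ℝ) ≤ lam := hlam.le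
  -- recurrences
  have rec1 : G1 = a * G0 - Real.exp (-lam) * lam ^ a := by
    rw [hG0, hG1, hγ, hγ]; exact aux_rec a lam ha hlam'
  have rec2 : G2 = (a + 1) * G1 - Real.exp (-lam) * lam ^ (a + 1) := by
    rw [hG1, hG2, hγ, hγ]
    have := aux_rec (a + 1) lam (by linarith) hlam'
    convert this using 3 <;> ring
  -- nonnegativity of G0
  have hG0nn : 0 ≤ G0 := by
    rw [hG0, hγ]
    apply intervalIntegral.integral_nonneg hlam'
    intro x hx
    exact mul_nonneg (Real.rpow_nonneg hx.1 _) (Real.exp_pos _).le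
  -- monotone bound: G1 ≤ lam * G0
  have hmono : G1 ≤ lam * G0 := by
    rw [hG0, hG1, hγ, hγ, ← intervalIntegral.integral_const_mul]
    apply intervalIntegral.integral_mono_on hlam'
    · exact aux_intble (a + 1) lam (by linarith) hlam'
    · exact (aux_intble a lam ha hlam').const_mul lam
    · intro x hx
      rcases hx with ⟨hx0, hx1⟩
      have hxpow : x ^ (a + 1 - 1) ≤ lam * x ^ (a - 1) := by
        rcases eq_or_lt_of_le hx0 with h | h
        · subst h
          simp only [Real.zero_rpow (by linarith : a + 1 - 1 ≠ 0)]
          positivity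
        · have : x ^ (a + 1 - 1) = x * x ^ (a - 1) := by
            rw [show a + 1 - 1 = 1 + (a - 1) by ring, Real.rpow_add h, Real.rpow_one]
          rw [this]
          exact mul_le_mul_of_nonneg_right hx1 (Real.rpow_nonneg hx0 _)
      calc x ^ (a + 1 - 1) * Real.exp (-x)
          ≤ (lam * x ^ (a - 1)) * Real.exp (-x) :=
            mul_le_mul_of_nonneg_right hxpow (Real.exp_pos _).le
        _ = lam * (x ^ (a - 1) * Real.exp (-x)) := by ring
  -- algebra
  have hE : 0 < Real.exp (-lam) * lam ^ a := by positivity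
  have hpow : lam ^ (a + 1) = lam ^ a * lam := by
    rw [Real.rpow_add hlam, Real.rpow_one]
  have key : G0 * (2 * G2 - (a + 2) * G1)
      = G1 ^ 2 + (Real.exp (-lam) * lam ^ a) * (G1 - 2 * lam * G0) := by
    rw [rec2, hpow, rec1]; ring
  nlinarith [key, mul_le_mul_of_nonneg_left hmono hE.le,
    mul_nonneg hE.le (mul_nonneg hlam' hG0nn)]
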